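/- For the separable state ρ_mix = (|01⟩⟨01| + |10⟩⟨10|)/2 and rotationally covariant POVM densities M_φ^{r_A}, M_ψ^{r_B} as above, the joint density tr[ρ_mix (M_φ^{r_A} ⊗ M_ψ^{r_B})] = 1/π² is constant, independent of φ, ψ, r_A, r_B; in particular the relative-angle distribution is uniform. -/

import Mathlib

open Matrix Complex
open scoped Matrix Kronecker Real ComplexOrder

noncomputable section

/-- The Pauli matrix `σ_x`. -/
def σx : Matrix (Fin 2) (Fin 2) ℂ := !![0, 1; 1, 0]
/-- The Pauli matrix `σ_y`. -/
def σy : Matrix (Fin 2) (Fin 2) ℂ := !![0, -Complex.I; Complex.I, 0]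
/-- The Pauli matrix `σ_z`. -/
def σz : Matrix (Fin 2) (Fin 2) ℂ := !![1, 0; 0, -1]

/-- `U φ = exp(-i φ σ_z)`, the unitary rotation about the z-axis. -/
def U (φ : ℝ) : Matrix (Fin 2) (Fin 2) ℂ :=
  NormedSpace.exp ((-(Complex.I * (φ : ℂ))) • σz)

/-- The rotationally covariant POVM density `M_φ^r = (1/π) U_φ* (𝟙 + r σ_x) U_φ`. -/
def Mpovm (r φ : ℝ) : Matrix (Fin 2) (Fin 2) ℂ :=
  ((π : ℂ))⁻¹ • ((U φ)ᴴ * ((1 : Matrix (Fin 2) (Fin 2) ℂ) + (r : ℂ) • σx) * U φ)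


lemma U_eq (φ : ℝ) : U φ = Matrix.diagonal ![Complex.exp (-(Complex.I * φ)), Complex.exp (Complex.I * φ)] := by
  have h : (-(Complex.I * (φ : ℂ))) • σz = Matrix.diagonal ![-(Complex.I * φ), Complex.I * φ] := by
    ext i j; fin_cases i <;> fin_cases j <;> simp [σz, Matrix.diagonal]
  rw [U, h, Matrix.exp_diagonal, Pi.exp_def]
  ext i j; fin_cases i <;> fin_cases j <;> simp [Matrix.diagonal, Complex.exp_eq_exp_ℂ]

lemma Mdiag (r θ : ℝ) (i : Fin 2) : Mpovm r θ i i = ((π : ℂ))⁻¹ := by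
  have h1 : Complex.exp (-(Complex.I * θ)) * Complex.exp (Complex.I * θ) = 1 := by
    rw [← Complex.exp_add]; simp
  have h2 : Complex.exp (Complex.I * θ) * Complex.exp (-(Complex.I * θ)) = 1 := by
    rw [← Complex.exp_add]; simp
  fin_cases i <;>
  · simp [Mpovm, U_eq, Matrix.mul_apply, Fin.sum_univ_succ, Matrix.conjTranspose_apply,
      Matrix.diagonal, σx, Matrix.one_apply, ← Complex.exp_conj, _root_.map_mul, map_neg]
    simp [h1, h2]

/-- A density matrix: positive semidefinite with unit trace. -/
def IsDensity {n : Type*} [Fintype n] [DecidableEq n] (ρ : Matrix n n ℂ) : Prop :=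
  ρ.PosSemidef ∧ ρ.trace = 1

/-- The singlet vector `|Ψ⁻⟩ = (|01⟩ - |10⟩)/√2`. -/
def ψminus : Fin 2 × Fin 2 → ℂ := fun p =>
  if p = (0, 1) then (Real.sqrt 2)⁻¹ else if p = (1, 0) then -(Real.sqrt 2)⁻¹ else 0

/-- The projector `|Ψ⁻⟩⟨Ψ⁻|`. -/
def singletProj : Matrix (Fin 2 × Fin 2) (Fin 2 × Fin 2) ℂ :=
  Matrix.vecMulVec ψminus (fun j => (starRingEnd ℂ) (ψminus j))

/-- The Werner state `W_f = f |Ψ⁻⟩⟨Ψ⁻| + ((1-f)/4) 𝟙₄`. -/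
def Werner (f : ℝ) : Matrix (Fin 2 × Fin 2) (Fin 2 × Fin 2) ℂ :=
  (f : ℂ) • singletProj + (((1 - f) / 4 : ℝ) : ℂ) • (1 : Matrix (Fin 2 × Fin 2) (Fin 2 × Fin 2) ℂ)

/-- for the separable mixture `ρ_mix = (|01⟩⟨01| + |10⟩⟨10|)/2`, the joint
density is uniform: `tr[ρ_mix (M_φ^{r_A} ⊗ M_ψ^{r_B})] = 1/π²` for all `φ, ψ, r_A, r_B`. -/
theorem separable_mixture_uniform_density (rA rB φ ψ : ℝ) :
    ((((2 : ℂ))⁻¹ • (Matrix.single ((0 : Fin 2), (1 : Fin 2)) ((0 : Fin 2), (1 : Fin 2)) (1 : ℂ)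
          + Matrix.single ((1 : Fin 2), (0 : Fin 2)) ((1 : Fin 2), (0 : Fin 2)) (1 : ℂ)))
        * (Mpovm rA φ ⊗ₖ Mpovm rB ψ)).trace
      = (((π : ℝ) ^ 2)⁻¹ : ℝ) := by
  have hA := Mdiag rA φ
  have hB := Mdiag rB ψ
  simp only [Matrix.trace, Matrix.diag_apply, Matrix.mul_apply, Matrix.smul_apply,
    Matrix.add_apply, Matrix.single, Matrix.kroneckerMap_apply,
    Fintype.sum_prod_type, Fin.sum_univ_succ, Fin.sum_univ_zero]
  simp [Prod.ext_iff, hA, hB]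
  field_simp
  ring
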